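/- arXiv:2508.11879 — 2 statements merged into one kernel-verified Lean document; each statement's English description precedes it below -/
import Mathlib

section
/- Let P be a reduced pipe dream for w and p a bump tile of P such that the pipe exiting p south has smaller label than the pipe exiting p west (s_p < w_p). Then for any dominant permutation π with w ≤_L π, the position p is π-dominated: row(p) ≤ λ'_{π(w⁻¹(s_p))}. -/
open Equiv MvPolynomial

/-- A permutation of ℕ has finite support. -/
def FinSupp (w : Equiv.Perm ℕ) : Prop := {i | w i ≠ i}.Finite

/-- Inversion set Inv(w) = {(i,j) : i < j, w i > w j}. -/
def invSet (w : Equiv.Perm ℕ) : Set (ℕ × ℕ) := {p | p.1 < p.2 ∧ w p.2 < w p.1}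

/-- Co-inversion set coInv(w) = {(i,j) : i < j, w i < w j}. -/
def coinvSet (w : Equiv.Perm ℕ) : Set (ℕ × ℕ) := {p | p.1 < p.2 ∧ w p.1 < w p.2}

/-- Coxeter length ℓ(w) = |Inv(w)|. -/
noncomputable def len (w : Equiv.Perm ℕ) : ℕ := (invSet w).ncard

/-- Cover relation of left weak order: u = s_k * w with ℓ(u) = ℓ(w) + 1. -/
def WeakCover (w u : Equiv.Perm ℕ) : Prop :=
  ∃ k, u = Equiv.swap k (k + 1) * w ∧ len u = len w + 1

/-- Left weak order: reflexive-transitive closure of weak covers. -/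
def leL (w u : Equiv.Perm ℕ) : Prop := Relation.ReflTransGen WeakCover w u

/-- π avoids the pattern 132 (π is dominant). -/
def Avoids132 (π : Equiv.Perm ℕ) : Prop :=
  ¬ ∃ a b c : ℕ, a < b ∧ b < c ∧ π a < π c ∧ π c < π b

/-- Rothe diagram D(π) (0-indexed conventions). -/
def Rothe (π : Equiv.Perm ℕ) : Set (ℕ × ℕ) := {p | p.1 < π⁻¹ p.2 ∧ p.2 < π p.1}

/-- Young diagram of a partition (0-indexed): row i has l i cells. -/
def yd (l : ℕ → ℕ) : Set (ℕ × ℕ) := {p | p.2 < l p.1}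

/-- Conjugate partition (0-indexed): column j has |{i : l i > j}| cells. -/
noncomputable def conjPart (l : ℕ → ℕ) (j : ℕ) : ℕ := {i | j < l i}.ncard

/-- A pipe dream: a finite set of crossing tiles together with the (uniquely
determined) labels of the pipes on the four edges of each tile.  At a cross
tile the pipes pass straight through; at a bump tile the pipe from the north
exits west and the pipe from the east exits south.  Pipe j enters the quadrant
at the north edge of column j. -/
structure PipeDream where
  cross : Finset (ℕ × ℕ)
  north : ℕ × ℕ → ℕ
  east : ℕ × ℕ → ℕ
  south : ℕ × ℕ → ℕ
  west : ℕ × ℕ → ℕ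
  north_top : ∀ j, north (0, j) = j
  north_succ : ∀ i j, north (i + 1, j) = south (i, j)
  east_eq : ∀ i j, east (i, j) = west (i, j + 1)
  south_cross : ∀ p ∈ cross, south p = north p
  west_cross : ∀ p ∈ cross, west p = east p
  south_bump : ∀ p, p ∉ cross → south p = east p
  west_bump : ∀ p, p ∉ cross → west p = north p

namespace PipeDream

/-- Pipes a and b cross at position p. -/
def CrossAt (P : PipeDream) (a b : ℕ) (p : ℕ × ℕ) : Prop :=
  p ∈ P.cross ∧ ({P.north p, P.east p} : Set ℕ) = {a, b}

/-- A pipe dream is reduced if no two pipes cross more than once. -/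
def Reduced (P : PipeDream) : Prop :=
  ∀ a b p q, P.CrossAt a b p → P.CrossAt a b q → p = q

/-- P is a pipe dream for the permutation w: pipe a exits on the west edge at
row w⁻¹(a), i.e. the one-line notation read along the west edge is w. -/
def IsFor (P : PipeDream) (w : Equiv.Perm ℕ) : Prop := ∀ i, P.west (i, 0) = w i

/-- Pipe k passes through the tile p. -/
def OnPipe (P : PipeDream) (k : ℕ) (p : ℕ × ℕ) : Prop := P.north p = k ∨ P.east p = k

/-- p lies weakly northwest of pipe k. -/
def NWOfPipe (P : PipeDream) (k : ℕ) (p : ℕ × ℕ) : Prop :=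
  ∃ q, P.OnPipe k q ∧ p.1 ≤ q.1 ∧ p.2 ≤ q.2

end PipeDream

/-- The set of reduced pipe dreams for w. -/
def PD (w : Equiv.Perm ℕ) : Set PipeDream := {P | P.Reduced ∧ P.IsFor w}

/-- The set of π-dominated positions of a pipe dream P ∈ PD(w), where π is the
dominant permutation with Rothe diagram the Young diagram of l:
row(p) < λ'(π(w⁻¹(s_p))) (0-indexed), s_p being the pipe exiting p south. -/
noncomputable def dominated (π : Equiv.Perm ℕ) (l : ℕ → ℕ) (w : Equiv.Perm ℕ)
    (P : PipeDream) : Set (ℕ × ℕ) :=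
  {p | p.1 < conjPart l (π (w⁻¹ (P.south p)))}

/-- The Schubert polynomial as the pipe dream generating function. -/
noncomputable def Schub (w : Equiv.Perm ℕ) : MvPolynomial ℕ ℤ :=
  ∑ᶠ P ∈ PD w, ∏ p ∈ P.cross, X p.1

/-- The polynomial ring ℤ[x;y]: x-variables are `Sum.inl i`, y-variables `Sum.inr i`. -/
abbrev PolyXY := MvPolynomial (ℕ ⊕ ℕ) ℤ

/-- The field of rational functions in the x- and y-variables. -/
noncomputable abbrev RatXY := FractionRing PolyXY

noncomputable def Xv (i : ℕ) : RatXY := algebraMap PolyXY RatXY (X (Sum.inl i))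
noncomputable def Yv (i : ℕ) : RatXY := algebraMap PolyXY RatXY (X (Sum.inr i))

/-- The π-padded Schubert polynomial 𝔖_w^π(x;y) = y^λ · 𝔖_w(x₁/y₁, x₂/y₂, …),
viewed in the field of rational functions. -/
noncomputable def padded (l : ℕ → ℕ) (w : Equiv.Perm ℕ) : RatXY :=
  (∏ᶠ i, Yv i ^ l i) * (aeval (fun i => Xv i / Yv i) (Schub w))

/-- Δ = Σ_i x_i ∂/∂y_i. -/
noncomputable def deltaOp (f : PolyXY) : PolyXY :=
  ∑ᶠ i : ℕ, X (Sum.inl i) * pderiv (Sum.inr i) f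

/-- ∇ = Σ_i y_i ∂/∂x_i. -/
noncomputable def nablaOp (f : PolyXY) : PolyXY :=
  ∑ᶠ i : ℕ, X (Sum.inr i) * pderiv (Sum.inl i) f


/-! ### Auxiliary lemmas -/

lemma swap_succ_lt {k m n : ℕ} (hmn : m < n) (h : ¬(m = k ∧ n = k+1)) :
    Equiv.swap k (k+1) m < Equiv.swap k (k+1) n := by
  rw [Equiv.swap_apply_def, Equiv.swap_apply_def]
  split_ifs <;> omega

lemma eq_inv_of_apply {w : Equiv.Perm ℕ} {i x : ℕ} (h : w i = x) : i = w⁻¹ x := by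
  rw [← h, Perm.coe_inv w, Equiv.symm_apply_apply]

lemma invSet_subset_of_cover {w u : Equiv.Perm ℕ} (h : WeakCover w u) :
    invSet w ⊆ invSet u := by
  obtain ⟨k, rfl, hlen⟩ := h
  by_cases hx : (w⁻¹ : Perm ℕ) (k+1) < w⁻¹ k
  · exfalso
    set d : ℕ × ℕ := (w⁻¹ (k+1), w⁻¹ k) with hd
    have hwd1 : w (w⁻¹ (k+1)) = k + 1 := Equiv.apply_symm_apply _ _
    have hwd2 : w (w⁻¹ k) = k := Equiv.apply_symm_apply _ _
    have hdmem : d ∈ invSet w := ⟨hx, by simp only [hd]; omega⟩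
    have hs1 : Equiv.swap k (k+1) k = k+1 := Equiv.swap_apply_left _ _
    have hs2 : Equiv.swap k (k+1) (k+1) = k := Equiv.swap_apply_right _ _
    have hset : invSet (Equiv.swap k (k+1) * w) = invSet w \ {d} := by
      ext ⟨i, j⟩
      simp only [invSet, Set.mem_setOf_eq, Set.mem_diff, Set.mem_singleton_iff,
        Perm.mul_apply, hd, Prod.mk.injEq]
      constructor
      · rintro ⟨hij, hlt⟩
        have hne : ¬(i = w⁻¹ (k+1) ∧ j = w⁻¹ k) := by
          rintro ⟨rfl, rfl⟩
          rw [hwd1, hwd2, hs1, hs2] at hlt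
          omega
        refine ⟨⟨hij, ?_⟩, hne⟩
        by_contra hle
        have hwij : w i < w j := by
          rcases lt_or_eq_of_le (not_lt.mp hle) with h' | h'
          · exact h'
          · exact absurd (w.injective h') (by omega)
        have hne2 : ¬(w i = k ∧ w j = k+1) := by
          rintro ⟨h1, h2⟩
          have e1 := eq_inv_of_apply h1
          have e2 := eq_inv_of_apply h2
          omega
        exact absurd (swap_succ_lt hwij hne2) (by omega)
      · rintro ⟨⟨hij, hlt⟩, hne⟩
        refine ⟨hij, ?_⟩
        apply swap_succ_lt hlt
        rintro ⟨h1, h2⟩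
        exact hne ⟨eq_inv_of_apply h2, eq_inv_of_apply h1⟩
    rw [len, len, hset] at hlen
    rcases (invSet w).finite_or_infinite with hfin | hinf
    · rw [Set.ncard_diff_singleton_of_mem hdmem] at hlen
      have hpos : 0 < (invSet w).ncard := (Set.ncard_pos hfin).mpr ⟨d, hdmem⟩
      omega
    · rw [Set.Infinite.ncard (hinf.diff (Set.finite_singleton d)), Set.Infinite.ncard hinf] at hlen
      omega
  · rintro ⟨i, j⟩ ⟨hij, hlt⟩
    refine ⟨hij, ?_⟩
    simp only [Perm.mul_apply]
    apply swap_succ_lt hlt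
    rintro ⟨h1, h2⟩
    exact hx (by rw [← eq_inv_of_apply h1, ← eq_inv_of_apply h2]; exact hij)

lemma invSet_subset_of_leL {w u : Equiv.Perm ℕ} (h : leL w u) : invSet w ⊆ invSet u := by
  induction h with
  | refl => exact subset_rfl
  | tail _ hcov ih => exact ih.trans (invSet_subset_of_cover hcov)

namespace PipeDream

variable (P : PipeDream)

/-- An edge of the pipe network: `(false, r, c)` is the north edge of tile
`(r,c)`; `(true, r, c)` is the west edge of tile `(r,c)`. -/
abbrev Edge := Bool × ℕ × ℕ

/-- The label (pipe number) on an edge. -/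
def lab : Edge → ℕ
  | (false, r, c) => P.north (r, c)
  | (true, r, c) => P.west (r, c)

/-- One step of a pipe travelling through the network. -/
def stp : Edge → Edge
  | (false, r, c) => if (r, c) ∈ P.cross then (false, r+1, c) else (true, r, c)
  | (true, r, 0) => (true, r, 0)
  | (true, r, c+1) => if (r, c) ∈ P.cross then (true, r, c) else (false, r+1, c)

/-- Backwards step. -/
def bck : Edge → Edge
  | (false, 0, c) => (false, 0, c)
  | (false, r+1, c) => if (r, c) ∈ P.cross then (false, r, c) else (true, r, c+1)
  | (true, r, c) => if (r, c) ∈ P.cross then (true, r, c+1) else (false, r, c)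

lemma lab_stp (e : Edge) : P.lab (P.stp e) = P.lab e := by
  obtain ⟨b, r, c⟩ := e
  cases b
  · by_cases h : (r, c) ∈ P.cross
    · simp only [stp, if_pos h, lab]
      rw [P.north_succ, P.south_cross _ h]
    · simp only [stp, if_neg h, lab]
      exact P.west_bump _ h
  · match c with
    | 0 => rfl
    | c+1 =>
      by_cases h : (r, c) ∈ P.cross
      · simp only [stp, if_pos h, lab]
        rw [P.west_cross _ h, P.east_eq]
      · simp only [stp, if_neg h, lab]
        rw [P.north_succ, P.south_bump _ h, P.east_eq]

lemma lab_bck (e : Edge) : P.lab (P.bck e) = P.lab e := by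
  obtain ⟨b, r, c⟩ := e
  cases b
  · match r with
    | 0 => rfl
    | r+1 =>
      by_cases h : (r, c) ∈ P.cross
      · simp only [bck, if_pos h, lab]
        rw [P.north_succ, P.south_cross _ h]
      · simp only [bck, if_neg h, lab]
        rw [P.north_succ, P.south_bump _ h, P.east_eq]
  · by_cases h : (r, c) ∈ P.cross
    · simp only [bck, if_pos h, lab]
      rw [P.west_cross _ h, P.east_eq]
    · simp only [bck, if_neg h, lab]
      exact (P.west_bump _ h).symm ▸ rfl

lemma stp_bck (e : Edge) (he : ¬(e.1 = false ∧ e.2.1 = 0)) : P.stp (P.bck e) = e := by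
  obtain ⟨b, r, c⟩ := e
  cases b
  · match r with
    | 0 => exact absurd ⟨rfl, rfl⟩ he
    | r+1 =>
      by_cases h : (r, c) ∈ P.cross
      · simp [bck, if_pos h, stp, h]
      · simp [bck, if_neg h, stp, h]
  · by_cases h : (r, c) ∈ P.cross
    · simp [bck, if_pos h, stp, h]
    · simp [bck, if_neg h, stp, h]

/-- Forward measure. -/
def mu (e : Edge) : ℕ :=
  2 * e.2.2 + (P.cross.filter fun q => e.2.1 ≤ q.1).card + (if e.1 then 0 else 1)

/-- Backward measure. -/
def nu (e : Edge) : ℕ :=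
  2 * e.2.1 + (P.cross.filter fun q => e.2.2 ≤ q.2).card + (if e.1 then 1 else 0)

lemma filter_row_succ_le {r : ℕ} : (P.cross.filter fun q => r+1 ≤ q.1).card ≤
    (P.cross.filter fun q => r ≤ q.1).card :=
  Finset.card_le_card (Finset.monotone_filter_right _ (fun q hq => by omega))

lemma filter_row_succ_lt {r c : ℕ} (h : (r, c) ∈ P.cross) :
    (P.cross.filter fun q => r+1 ≤ q.1).card < (P.cross.filter fun q => r ≤ q.1).card := by
  apply Finset.card_lt_card
  refine (Finset.ssubset_iff_of_subset (Finset.monotone_filter_right _ (fun q hq => by omega))).mpr ?_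
  exact ⟨(r, c), Finset.mem_filter.mpr ⟨h, le_rfl⟩, fun hc => by
    have := (Finset.mem_filter.mp hc).2; omega⟩

lemma filter_col_succ_le {c : ℕ} : (P.cross.filter fun q => c+1 ≤ q.2).card ≤
    (P.cross.filter fun q => c ≤ q.2).card :=
  Finset.card_le_card (Finset.monotone_filter_right _ (fun q hq => by omega))

lemma filter_col_succ_lt {r c : ℕ} (h : (r, c) ∈ P.cross) :
    (P.cross.filter fun q => c+1 ≤ q.2).card < (P.cross.filter fun q => c ≤ q.2).card := by
  apply Finset.card_lt_card
  refine (Finset.ssubset_iff_of_subset (Finset.monotone_filter_right _ (fun q hq => by omega))).mpr ?_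
  exact ⟨(r, c), Finset.mem_filter.mpr ⟨h, le_rfl⟩, fun hc => by
    have := (Finset.mem_filter.mp hc).2; omega⟩

lemma mu_decr (e : Edge) (he : ¬(e.1 = true ∧ e.2.2 = 0)) : P.mu (P.stp e) < P.mu e := by
  obtain ⟨b, r, c⟩ := e
  cases b
  · by_cases h : (r, c) ∈ P.cross
    · simp only [stp, if_pos h, mu]
      have := P.filter_row_succ_lt h
      simp only [Bool.false_eq_true, if_true, if_false]
      omega
    · simp only [stp, if_neg h, mu]
      simp only [Bool.false_eq_true, if_true, if_false]
      omega
  · match c with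
    | 0 => exact absurd ⟨rfl, rfl⟩ he
    | c+1 =>
      by_cases h : (r, c) ∈ P.cross
      · simp only [stp, if_pos h, mu]
        simp only [Bool.false_eq_true, if_true, if_false]
        omega
      · simp only [stp, if_neg h, mu]
        have := P.filter_row_succ_le (r := r)
        simp only [Bool.false_eq_true, if_true, if_false]
        omega

lemma nu_decr (e : Edge) (he : ¬(e.1 = false ∧ e.2.1 = 0)) : P.nu (P.bck e) < P.nu e := by
  obtain ⟨b, r, c⟩ := e
  cases b
  · match r with
    | 0 => exact absurd ⟨rfl, rfl⟩ he
    | r+1 =>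
      by_cases h : (r, c) ∈ P.cross
      · simp only [bck, if_pos h, nu]
        simp only [Bool.false_eq_true, if_true, if_false]
        omega
      · simp only [bck, if_neg h, nu]
        have := P.filter_col_succ_le (c := c)
        simp only [Bool.false_eq_true, if_true, if_false]
        omega
  · by_cases h : (r, c) ∈ P.cross
    · simp only [bck, if_pos h, nu]
      have := P.filter_col_succ_lt h
      simp only [Bool.false_eq_true, if_true, if_false]
      omega
    · simp only [bck, if_neg h, nu]
      simp only [Bool.false_eq_true, if_true, if_false]
      omega

lemma exit_exists (e : Edge) : ∃ n r, P.stp^[n] e = (true, r, 0) := by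
  generalize hm : P.mu e = m
  induction m using Nat.strong_induction_on generalizing e with
  | _ m ih =>
    by_cases he : e.1 = true ∧ e.2.2 = 0
    · obtain ⟨b, r, c⟩ := e
      obtain ⟨h1, h2⟩ := he
      dsimp only at h1 h2
      subst h1 h2
      exact ⟨0, r, rfl⟩
    · obtain ⟨n, r, hn⟩ := ih _ (hm ▸ P.mu_decr e he) (P.stp e) rfl
      exact ⟨n+1, r, by rw [Function.iterate_succ_apply]; exact hn⟩

lemma from_start (e : Edge) : ∃ n, P.stp^[n] (false, 0, P.lab e) = e := by
  generalize hm : P.nu e = m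
  induction m using Nat.strong_induction_on generalizing e with
  | _ m ih =>
    by_cases he : e.1 = false ∧ e.2.1 = 0
    · obtain ⟨b, r, c⟩ := e
      obtain ⟨h1, h2⟩ := he
      dsimp only at h1 h2
      subst h1 h2
      refine ⟨0, ?_⟩
      simp [lab, P.north_top]
    · obtain ⟨n, hn⟩ := ih _ (hm ▸ P.nu_decr e he) (P.bck e) rfl
      rw [P.lab_bck] at hn
      exact ⟨n+1, by rw [Function.iterate_succ_apply']; rw [hn]; exact P.stp_bck e he⟩


/-- The orbit of pipe `k`. -/
def orb (k n : ℕ) : Edge := P.stp^[n] (false, 0, k)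

def OnOrb (k : ℕ) (e : Edge) : Prop := ∃ n, P.orb k n = e

lemma orb_succ (k n : ℕ) : P.orb k (n+1) = P.stp (P.orb k n) :=
  Function.iterate_succ_apply' _ _ _

lemma orb_lab (k n : ℕ) : P.lab (P.orb k n) = k := by
  induction n with
  | zero => simp [orb, lab, P.north_top]
  | succ n ih => rw [orb_succ, P.lab_stp]; exact ih

lemma onOrb_lab {k : ℕ} {e : Edge} (h : P.OnOrb k e) : P.lab e = k := by
  obtain ⟨n, rfl⟩ := h; exact P.orb_lab k n

lemma onOrb_of_lab (e : Edge) : P.OnOrb (P.lab e) e := P.from_start e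

lemma row_stp_le (e : Edge) : e.2.1 ≤ (P.stp e).2.1 ∧ (P.stp e).2.1 ≤ e.2.1 + 1 := by
  obtain ⟨b, r, c⟩ := e
  cases b
  · by_cases h : (r, c) ∈ P.cross <;> simp [stp, h]
  · match c with
    | 0 => simp [stp]
    | c+1 => by_cases h : (r, c) ∈ P.cross <;> simp [stp, h]

lemma col_stp_le (e : Edge) : (P.stp e).2.2 ≤ e.2.2 := by
  obtain ⟨b, r, c⟩ := e
  cases b
  · by_cases h : (r, c) ∈ P.cross <;> simp [stp, h]
  · match c with
    | 0 => simp [stp]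
    | c+1 => by_cases h : (r, c) ∈ P.cross <;> simp [stp, h]

lemma landing_v (e : Edge) (h : (P.stp e).2.1 ≠ e.2.1) : (P.stp e).1 = false := by
  obtain ⟨b, r, c⟩ := e
  cases b
  · by_cases hc : (r, c) ∈ P.cross <;> simp [stp, hc] at h ⊢
  · match c with
    | 0 => simp [stp] at h
    | c+1 => by_cases hc : (r, c) ∈ P.cross <;> simp [stp, hc] at h ⊢

lemma orb_row_mono (k : ℕ) : Monotone fun n => (P.orb k n).2.1 := by
  apply monotone_nat_of_le_succ
  intro n
  rw [orb_succ]
  exact (P.row_stp_le _).1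

lemma orb_col_anti (k : ℕ) : Antitone fun n => (P.orb k n).2.2 := by
  apply antitone_nat_of_succ_le
  intro n
  rw [orb_succ]
  exact P.col_stp_le _

lemma orb_row_succ_le (k n : ℕ) : (P.orb k (n+1)).2.1 ≤ (P.orb k n).2.1 + 1 := by
  rw [orb_succ]; exact (P.row_stp_le _).2

lemma stp_fix (r : ℕ) : P.stp (true, r, 0) = (true, r, 0) := rfl

variable {w : Equiv.Perm ℕ}

lemma orb_exit (hfor : P.IsFor w) (k : ℕ) :
    ∃ N, P.orb k N = (true, w⁻¹ k, 0) ∧ ∀ n, N ≤ n → P.orb k n = (true, w⁻¹ k, 0) := by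
  obtain ⟨N, r, hN⟩ := P.exit_exists (false, 0, k)
  have hlab : P.lab (P.orb k N) = k := P.orb_lab k N
  have horb : P.orb k N = (true, r, 0) := hN
  rw [horb] at hlab
  have hr : w r = k := by rw [← hfor r]; exact hlab
  have hrr : r = w⁻¹ k := by rw [← hr, Perm.coe_inv w, Equiv.symm_apply_apply]
  subst hrr
  refine ⟨N, horb, ?_⟩
  intro n hn
  obtain ⟨d, rfl⟩ := Nat.exists_eq_add_of_le hn
  induction d with
  | zero => exact horb
  | succ d ih => rw [← Nat.add_assoc, orb_succ, ih (by omega), stp_fix]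

lemma orb_row_le (hfor : P.IsFor w) (k n : ℕ) : (P.orb k n).2.1 ≤ w⁻¹ k := by
  obtain ⟨N, hN, hfix⟩ := P.orb_exit hfor k
  rcases le_total n N with h | h
  · have := P.orb_row_mono k h
    simp only [hN] at this
    exact this
  · rw [hfix n h]

lemma onOrb_row_le (hfor : P.IsFor w) {k : ℕ} {e : Edge} (h : P.OnOrb k e) :
    e.2.1 ≤ w⁻¹ k := by
  obtain ⟨n, rfl⟩ := h; exact P.orb_row_le hfor k n

/-- Once horizontal within a row, stays horizontal while the row is unchanged. -/
lemma h_forever {k m : ℕ} {r x : ℕ} (hm : P.orb k m = (true, r, x)) :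
    ∀ n, m ≤ n → (P.orb k n).2.1 = r → (P.orb k n).1 = true := by
  intro n hn
  induction n, hn using Nat.le_induction with
  | base => intro _; rw [hm]
  | succ n hn ih =>
    intro hrow
    have hrow_n : (P.orb k n).2.1 = r := by
      have h1 : r ≤ (P.orb k n).2.1 := by
        have := P.orb_row_mono k hn
        simp only [hm] at this
        exact this
      have h2 : (P.orb k n).2.1 ≤ (P.orb k (n+1)).2.1 := P.orb_row_mono k (Nat.le_succ n)
      omega
    have hbn : (P.orb k n).1 = true := ih hrow_n
    rcases horb : P.orb k n with ⟨b, r', c⟩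
    rw [horb] at hbn hrow_n
    dsimp only at hbn hrow_n
    subst hbn hrow_n
    rw [orb_succ, horb] at hrow ⊢
    match c with
    | 0 => rfl
    | c+1 =>
      by_cases hc : (r', c) ∈ P.cross
      · simp [stp, hc]
      · simp [stp, hc] at hrow

/-- There is at most one vertical edge of the orbit in each row. -/
lemma v_unique {k n m r c c' : ℕ} (hn : P.orb k n = (false, r, c))
    (hm : P.orb k m = (false, r, c')) : n = m := by
  rcases lt_trichotomy n m with h | h | h
  · exfalso
    have hstep : P.orb k (n+1) = (true, r, c) := by
      rw [orb_succ, hn]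
      have hrow : (P.stp (false, r, c)).2.1 = r := by
        have h1 : (P.stp (false, r, c)).2.1 ≤ r + 1 := by
          have := (P.row_stp_le (false, r, c)).2; exact this
        have h2 : r ≤ (P.stp (false, r, c)).2.1 := (P.row_stp_le (false, r, c)).1
        have e1 : P.orb k (n+1) = P.stp (false, r, c) := by rw [orb_succ, hn]
        have h3 : (P.orb k (n+1)).2.1 ≤ (P.orb k m).2.1 := P.orb_row_mono k (by omega)
        rw [e1, hm] at h3
        dsimp only at h3
        omega
      by_cases hc : (r, c) ∈ P.cross
      · simp [stp, hc] at hrow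
      · simp [stp, hc]
    have := P.h_forever hstep m (by omega) (by rw [hm])
    rw [hm] at this
    simp at this
  · exact h
  · exfalso
    have hstep : P.orb k (m+1) = (true, r, c') := by
      rw [orb_succ, hm]
      have hrow : (P.stp (false, r, c')).2.1 = r := by
        have h1 : (P.stp (false, r, c')).2.1 ≤ r + 1 := (P.row_stp_le (false, r, c')).2
        have h2 : r ≤ (P.stp (false, r, c')).2.1 := (P.row_stp_le (false, r, c')).1
        have e1 : P.orb k (m+1) = P.stp (false, r, c') := by rw [orb_succ, hm]
        have h3 : (P.orb k (m+1)).2.1 ≤ (P.orb k n).2.1 := P.orb_row_mono k (by omega)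
        rw [e1, hn] at h3
        dsimp only at h3
        omega
      by_cases hc : (r, c') ∈ P.cross
      · simp [stp, hc] at hrow
      · simp [stp, hc]
    have := P.h_forever hstep n (by omega) (by rw [hn])
    rw [hn] at this
    simp at this

lemma vcol_unique {k r c c' : ℕ} (h : P.OnOrb k (false, r, c))
    (h' : P.OnOrb k (false, r, c')) : c = c' := by
  obtain ⟨n, hn⟩ := h
  obtain ⟨m, hm⟩ := h'
  have := P.v_unique hn hm
  subst this
  rw [hn] at hm
  exact (Prod.ext_iff.mp (Prod.ext_iff.mp hm).2).2

lemma vcol_mono {k r r' c c' : ℕ} (h : P.OnOrb k (false, r, c))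
    (h' : P.OnOrb k (false, r', c')) (hr : r ≤ r') : c' ≤ c := by
  obtain ⟨n, hn⟩ := h
  obtain ⟨m, hm⟩ := h'
  rcases le_or_gt n m with hnm | hnm
  · have := P.orb_col_anti k hnm
    simp only [hn, hm] at this
    exact this
  · have hrow : r' ≤ r := by
      have := P.orb_row_mono k (le_of_lt hnm)
      simp only [hn, hm] at this
      exact this
    have : r = r' := le_antisymm hr hrow
    subst this
    have := P.v_unique hn hm
    omega

lemma h_le_v {k r ch cv : ℕ} (h : P.OnOrb k (true, r, ch))
    (h' : P.OnOrb k (false, r, cv)) : ch ≤ cv := by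
  obtain ⟨m, hm⟩ := h
  obtain ⟨n, hn⟩ := h'
  rcases le_or_gt n m with hnm | hnm
  · have := P.orb_col_anti k hnm
    simp only [hn, hm] at this
    exact this
  · exfalso
    have := P.h_forever hm n (le_of_lt hnm) (by rw [hn])
    rw [hn] at this
    simp at this

/-- Workhorse: if the orbit has a vertical edge at `(r, cv)` and never drops to
row `r+1` at any column `≥ c`, then it passes horizontally through row `r`
crossing tile `(r,c)`. -/
lemma chain {k n r cv c : ℕ} (hV : P.orb k n = (false, r, cv))
    (Hno : ∀ x, c ≤ x → ¬ P.OnOrb k (false, r+1, x)) (hlt : c < cv) :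
    (r, c) ∈ P.cross ∧ P.west (r, c+1) = k := by
  have h_start : P.orb k (n+1) = (true, r, cv) := by
    rw [orb_succ, hV]
    by_cases hc : (r, cv) ∈ P.cross
    · exfalso
      exact Hno cv (le_of_lt hlt) ⟨n+1, by rw [orb_succ, hV]; simp [stp, hc]⟩
    · simp [stp, hc]
  have h_pass : ∀ m x, P.orb k m = (true, r, x+1) → c ≤ x →
      P.orb k (m+1) = (true, r, x) ∧ (r, x) ∈ P.cross := by
    intro m x hm hx
    by_cases hc : (r, x) ∈ P.cross
    · exact ⟨by rw [orb_succ, hm]; simp [stp, hc], hc⟩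
    · exfalso
      exact Hno x hx ⟨m+1, by rw [orb_succ, hm]; simp [stp, hc]⟩
  have aux : ∀ d x, x + d = cv → c ≤ x → P.OnOrb k (true, r, x) := by
    intro d
    induction d with
    | zero => intro x hx _; subst hx; simpa using ⟨n+1, h_start⟩
    | succ d ih =>
      intro x hx hcx
      obtain ⟨m, hm⟩ := ih (x+1) (by omega) (by omega)
      exact ⟨m+1, (h_pass m x hm hcx).1⟩
  obtain ⟨m, hm⟩ := aux (cv - (c+1)) (c+1) (by omega) (by omega)
  refine ⟨(h_pass m c hm le_rfl).2, ?_⟩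
  have := P.orb_lab k m
  rw [hm] at this
  exact this

lemma vcol_exists (hfor : P.IsFor w) {k r : ℕ} (hr : r ≤ w⁻¹ k) :
    ∃ c, P.OnOrb k (false, r, c) := by
  classical
  obtain ⟨N, hN, _⟩ := P.orb_exit hfor k
  have hQN : r ≤ (P.orb k N).2.1 := by rw [hN]; exact hr
  have hex : ∃ n, r ≤ (P.orb k n).2.1 := ⟨N, hQN⟩
  set n1 := Nat.find hex with hn1
  have hQ : r ≤ (P.orb k n1).2.1 := Nat.find_spec hex
  rcases Nat.eq_zero_or_pos n1 with h0 | hpos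
  · have : P.orb k 0 = (false, 0, k) := rfl
    rw [h0, this] at hQ
    dsimp only at hQ
    have : r = 0 := by omega
    exact ⟨k, 0, by rw [this]; rfl⟩
  · have hlt : ¬ r ≤ (P.orb k (n1 - 1)).2.1 := Nat.find_min hex (by omega)
    have hle : (P.orb k n1).2.1 ≤ (P.orb k (n1 - 1)).2.1 + 1 := by
      have := P.orb_row_succ_le k (n1 - 1)
      rwa [Nat.sub_add_cancel hpos] at this
    have hrow : (P.orb k n1).2.1 = r := by omega
    have hne : (P.orb k n1).2.1 ≠ (P.orb k (n1 - 1)).2.1 := by omega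
    have hb : (P.orb k n1).1 = false := by
      have he : P.orb k n1 = P.stp (P.orb k (n1 - 1)) := by
        rw [← orb_succ, Nat.sub_add_cancel hpos]
      rw [he] at hne ⊢
      exact P.landing_v _ hne
    rcases horb : P.orb k n1 with ⟨b, r2, c⟩
    rw [horb] at hb hrow
    dsimp only at hb hrow
    subst hb hrow
    exact ⟨c, n1, horb⟩

lemma pipe_main (hred : P.Reduced) (hfor : P.IsFor w) (i j : ℕ)
    (hp : (i, j) ∉ P.cross) (hst : P.east (i, j) < P.north (i, j)) :
    w⁻¹ (P.north (i, j)) < w⁻¹ (P.east (i, j)) ∧ i ≤ w⁻¹ (P.north (i, j)) := by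
  classical
  set s := P.east (i, j) with hs
  set t := P.north (i, j) with ht
  have hTedge : P.OnOrb t (false, i, j) := P.onOrb_of_lab (false, i, j)
  have hSedge : P.OnOrb s (true, i, j+1) := by
    have h0 := P.onOrb_of_lab (true, i, j+1)
    have hl : P.lab (true, i, j+1) = s := by
      show P.west (i, j+1) = s
      rw [← P.east_eq]
    rwa [hl] at h0
  have hSdrop : P.OnOrb s (false, i+1, j) := by
    obtain ⟨m, hm⟩ := hSedge
    exact ⟨m+1, by rw [orb_succ, hm]; simp [stp, hp]⟩
  have hib : i ≤ w⁻¹ t := P.onOrb_row_le hfor hTedge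
  have hia : i + 1 ≤ w⁻¹ s := P.onOrb_row_le hfor hSdrop
  refine ⟨?_, hib⟩
  by_contra hcon
  have hab : w⁻¹ s ≠ w⁻¹ t := fun h => (Nat.ne_of_lt hst) ((w⁻¹).injective h)
  have hor : w⁻¹ s < w⁻¹ t := by omega
  set a := w⁻¹ s with ha
  set b := w⁻¹ t with hb
  have hCs' : ∀ r, ∃ c, r ≤ a → P.OnOrb s (false, r, c) := by
    intro r
    by_cases h : r ≤ a
    · obtain ⟨c, hc⟩ := P.vcol_exists hfor (k := s) h
      exact ⟨c, fun _ => hc⟩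
    · exact ⟨0, fun h' => absurd h' h⟩
  choose Cs hCs using hCs'
  have hCt' : ∀ r, ∃ c, r ≤ b → P.OnOrb t (false, r, c) := by
    intro r
    by_cases h : r ≤ b
    · obtain ⟨c, hc⟩ := P.vcol_exists hfor (k := t) h
      exact ⟨c, fun _ => hc⟩
    · exact ⟨0, fun h' => absurd h' h⟩
  choose Ct hCt using hCt'
  have hCs0 : Cs 0 = s := P.vcol_unique (hCs 0 (Nat.zero_le _)) ⟨0, rfl⟩
  have hCt0 : Ct 0 = t := P.vcol_unique (hCt 0 (Nat.zero_le _)) ⟨0, rfl⟩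
  have hCti : Ct i = j := P.vcol_unique (hCt i hib) hTedge
  have hCsi : j + 1 ≤ Cs i := P.h_le_v hSedge (hCs i (by omega))
  have hne_cols : ∀ r, r ≤ a → r ≤ b → Cs r ≠ Ct r := by
    intro r hra hrb heq
    have h1 : P.lab (false, r, Cs r) = s := P.onOrb_lab (hCs r hra)
    have h2 : P.lab (false, r, Ct r) = t := P.onOrb_lab (hCt r hrb)
    rw [heq, h2] at h1
    exact (Nat.ne_of_lt hst) h1.symm
  -- first crossing, strictly above row i
  have hex1 : ∃ r, r ≤ i ∧ Ct r < Cs r := ⟨i, le_rfl, by omega⟩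
  set r1 := Nat.find hex1 with hr1
  obtain ⟨hr1i, hr1lt⟩ : r1 ≤ i ∧ Ct r1 < Cs r1 := Nat.find_spec hex1
  have hr1pos : 0 < r1 := by
    rcases Nat.eq_zero_or_pos r1 with h0 | h
    · rw [h0, hCs0, hCt0] at hr1lt; omega
    · exact h
  have hprev : Cs (r1 - 1) < Ct (r1 - 1) := by
    have hnot : ¬ (r1 - 1 ≤ i ∧ Ct (r1 - 1) < Cs (r1 - 1)) := Nat.find_min hex1 (by omega)
    have hne := hne_cols (r1 - 1) (by omega) (by omega)
    omega
  have hchain1 : (r1 - 1, Cs r1) ∈ P.cross ∧ P.west (r1 - 1, Cs r1 + 1) = t := by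
    obtain ⟨n, hn⟩ := hCt (r1 - 1) (by omega)
    apply P.chain (n := n) (hV := by rw [hn])
    · intro x hx hon
      have heq : x = Ct r1 := by
        have h1 : P.OnOrb t (false, r1, x) := by
          have : r1 - 1 + 1 = r1 := by omega
          rwa [this] at hon
        exact (P.vcol_unique h1 (hCt r1 (by omega))).symm ▸ rfl
      omega
    · have hmono : Cs r1 ≤ Cs (r1 - 1) :=
        P.vcol_mono (hCs (r1 - 1) (by omega)) (hCs r1 (by omega)) (by omega)
      omega
  have hq1cross : P.CrossAt s t (r1 - 1, Cs r1) := by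
    refine ⟨hchain1.1, ?_⟩
    have hnorth : P.north (r1 - 1, Cs r1) = s := by
      have h1 : P.north (r1, Cs r1) = s := P.onOrb_lab (hCs r1 (by omega))
      have h2 : P.north (r1 - 1 + 1, Cs r1) = P.south (r1 - 1, Cs r1) := P.north_succ _ _
      have h3 : P.south (r1 - 1, Cs r1) = P.north (r1 - 1, Cs r1) :=
        P.south_cross _ hchain1.1
      have h4 : r1 - 1 + 1 = r1 := by omega
      rw [h4] at h2
      rw [h1] at h2
      rw [h3] at h2
      exact h2.symm
    have heast : P.east (r1 - 1, Cs r1) = t := by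
      rw [P.east_eq]; exact hchain1.2
    rw [hnorth, heast]
  -- second crossing, at row ≥ i
  have hq2 : ∃ q2, P.CrossAt s t q2 ∧ i ≤ q2.1 := by
    by_cases hflip2 : ∃ r, i ≤ r ∧ r ≤ a ∧ Cs r < Ct r
    · set r2 := Nat.find hflip2 with hr2
      obtain ⟨hr2i, hr2a, hr2lt⟩ : i ≤ r2 ∧ r2 ≤ a ∧ Cs r2 < Ct r2 := Nat.find_spec hflip2
      have hr2gt : i < r2 := by
        rcases Nat.lt_or_ge i r2 with h | h
        · exact h
        · exfalso
          have : r2 = i := by omega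
          rw [this, hCti] at hr2lt
          omega
      have hprev2 : Ct (r2 - 1) < Cs (r2 - 1) := by
        have hnot : ¬ (i ≤ r2 - 1 ∧ r2 - 1 ≤ a ∧ Cs (r2 - 1) < Ct (r2 - 1)) :=
          Nat.find_min hflip2 (by omega)
        have hne := hne_cols (r2 - 1) (by omega) (by omega)
        omega
      have hchain2 : (r2 - 1, Ct r2) ∈ P.cross ∧ P.west (r2 - 1, Ct r2 + 1) = s := by
        obtain ⟨n, hn⟩ := hCs (r2 - 1) (by omega)
        apply P.chain (n := n) (hV := by rw [hn])
        · intro x hx hon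
          have h1 : P.OnOrb s (false, r2, x) := by
            have : r2 - 1 + 1 = r2 := by omega
            rwa [this] at hon
          have heq := P.vcol_unique h1 (hCs r2 (by omega))
          omega
        · have hmono : Ct r2 ≤ Ct (r2 - 1) :=
            P.vcol_mono (hCt (r2 - 1) (by omega)) (hCt r2 (by omega)) (by omega)
          omega
      refine ⟨(r2 - 1, Ct r2), ⟨hchain2.1, ?_⟩, by dsimp only; omega⟩
      have hnorth : P.north (r2 - 1, Ct r2) = t := by
        have h1 : P.north (r2, Ct r2) = t := P.onOrb_lab (hCt r2 (by omega))
        have h2 : P.north (r2 - 1 + 1, Ct r2) = P.south (r2 - 1, Ct r2) := P.north_succ _ _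
        have h3 : P.south (r2 - 1, Ct r2) = P.north (r2 - 1, Ct r2) :=
          P.south_cross _ hchain2.1
        have h4 : r2 - 1 + 1 = r2 := by omega
        rw [h4] at h2
        rw [h1] at h2
        rw [h3] at h2
        exact h2.symm
      have heast : P.east (r2 - 1, Ct r2) = s := by
        rw [P.east_eq]; exact hchain2.2
      rw [hnorth, heast]
      exact Set.pair_comm t s
    · push_neg at hflip2
      have hCta : Ct a < Cs a := by
        have h1 := hflip2 a (by omega) le_rfl
        have hne := hne_cols a le_rfl (by omega)
        omega
      have hchain3 : (a, Ct a) ∈ P.cross ∧ P.west (a, Ct a + 1) = s := by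
        obtain ⟨n, hn⟩ := hCs a le_rfl
        apply P.chain (n := n) (hV := by rw [hn])
        · intro x hx hon
          have := P.onOrb_row_le hfor hon
          dsimp only at this
          omega
        · exact hCta
      refine ⟨(a, Ct a), ⟨hchain3.1, ?_⟩, by dsimp only; omega⟩
      have hnorth : P.north (a, Ct a) = t := P.onOrb_lab (hCt a (by omega))
      have heast : P.east (a, Ct a) = s := by
        rw [P.east_eq]; exact hchain3.2
      rw [hnorth, heast]
      exact Set.pair_comm t s
  obtain ⟨q2, hq2cross, hq2row⟩ := hq2
  have heq := hred s t _ _ hq1cross hq2cross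
  have h5 := congrArg Prod.fst heq
  dsimp only at h5
  omega

end PipeDream

/-- if at a bump tile p of P ∈ PD(w) the pipe exiting south has
smaller label than the pipe exiting west, then p is π-dominated for any
dominant π ≥_L w. -/
theorem stmt12 (π w : Equiv.Perm ℕ) (l : ℕ → ℕ) (hπ : FinSupp π)
    (hdom : Avoids132 π) (hl : Antitone l) (hsupp : (Function.support l).Finite)
    (hD : Rothe π = yd l) (hw : leL w π)
    (P : PipeDream) (hP : P ∈ PD w) (p : ℕ × ℕ) (hp : p ∉ P.cross)
    (h : P.south p < P.west p) :
    p.1 < conjPart l (π (w⁻¹ (P.south p))) := by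
  obtain ⟨hred, hfor⟩ := hP
  obtain ⟨i, j⟩ := p
  have hse : P.south (i, j) = P.east (i, j) := P.south_bump _ hp
  have hwn : P.west (i, j) = P.north (i, j) := P.west_bump _ hp
  rw [hse, hwn] at h
  rw [hse]
  obtain ⟨hlt, hle⟩ := P.pipe_main hred hfor i j hp h
  set s := P.east (i, j) with hsdef
  set t := P.north (i, j) with htdef
  have hinv : ((w⁻¹ t, w⁻¹ s) : ℕ × ℕ) ∈ invSet w := by
    refine ⟨hlt, ?_⟩
    dsimp only
    rw [Perm.coe_inv w, Equiv.apply_symm_apply, Equiv.apply_symm_apply]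
    exact h
  obtain ⟨h1, h2⟩ := invSet_subset_of_leL hw hinv
  dsimp only at h1 h2
  have hR : ((w⁻¹ t, π (w⁻¹ s)) : ℕ × ℕ) ∈ Rothe π := by
    constructor
    · dsimp only
      rw [Perm.coe_inv π, Equiv.symm_apply_apply]
      exact h1
    · exact h2
  rw [hD] at hR
  have hyd : π (w⁻¹ s) < l (w⁻¹ t) := hR
  have hsub : Set.Iic (w⁻¹ t) ⊆ {x | π (w⁻¹ s) < l x} := fun x hx =>
    lt_of_lt_of_le hyd (hl hx)
  have hfin : {x | π (w⁻¹ s) < l x}.Finite :=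
    hsupp.subset (fun x hx => by
      simp only [Set.mem_setOf_eq] at hx
      simp only [Function.mem_support]
      omega)
  have hcard : (Set.Iic (w⁻¹ t)).ncard = w⁻¹ t + 1 := by
    rw [← Finset.coe_Iic, Set.ncard_coe_finset, Nat.card_Iic]
  calc ((i, j) : ℕ × ℕ).1 < (Set.Iic (w⁻¹ t)).ncard := by
        rw [hcard]; dsimp only; omega
    _ ≤ {x | π (w⁻¹ s) < l x}.ncard := Set.ncard_le_ncard hsub hfin
    _ = conjPart l (π (w⁻¹ s)) := rfl
end

section
/- Let P ∈ PD(w) and p a bump tile of P that is (A,k)-aligned (p lies weakly northwest of pipe k and (w_p, k) ∈ Inv(w⁻¹)). Then (P,p) is slidable: w⁻¹(w_p) > row(p), i.e., there exists a bump tile q in the same row as p with s_q = w_p. -/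
open Equiv MvPolynomial

namespace PipeDream

/-- Descending column j from row i through crosses, the pipe entering from the
north eventually reaches a bump and exits west with the same label. -/
lemma col_descend (P : PipeDream) (i j : ℕ) :
    ∃ i', i ≤ i' ∧ (i', j) ∉ P.cross ∧ P.west (i', j) = P.north (i, j) := by
  have hne : ∃ m, (i + m, j) ∉ P.cross := by
    by_contra h
    push_neg at h
    have hinj : Function.Injective (fun m : ℕ => ((i + m, j) : ℕ × ℕ)) := by
      intro a b hab; simpa using hab
    have h1 : (Set.range fun m : ℕ => ((i + m, j) : ℕ × ℕ)).Infinite :=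
      Set.infinite_range_of_injective hinj
    have h2 : (Set.range fun m : ℕ => ((i + m, j) : ℕ × ℕ)) ⊆ ↑P.cross := by
      rintro _ ⟨m, rfl⟩; exact h m
    exact h1 (P.cross.finite_toSet.subset h2)
  set m := Nat.find hne with hm
  have hbump : (i + m, j) ∉ P.cross := Nat.find_spec hne
  have hmem : ∀ m' < m, (i + m', j) ∈ P.cross := by
    intro m' h
    have := Nat.find_min hne h
    simpa using this
  have hnorth : ∀ m' ≤ m, P.north (i + m', j) = P.north (i, j) := by
    intro m' hm'
    induction m' with
    | zero => simp
    | succ n ih =>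
      have hn : n < m := lt_of_lt_of_le (Nat.lt_succ_self n) hm'
      have h1 : P.north (i + (n + 1), j) = P.south (i + n, j) :=
        P.north_succ (i + n) j
      rw [h1, P.south_cross _ (hmem n hn), ih (le_of_lt hn)]
  exact ⟨i + m, Nat.le_add_right i m, hbump, by
    rw [P.west_bump _ hbump, hnorth m le_rfl]⟩

/-- The pipe exiting west at row i exits the quadrant at a row ≥ i. -/
lemma le_inv_west (P : PipeDream) (w : Equiv.Perm ℕ) (hw : P.IsFor w) :
    ∀ j i, i ≤ w⁻¹ (P.west (i, j)) := by
  intro j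
  induction j with
  | zero => intro i; rw [hw i]; simp
  | succ j ih =>
    intro i
    have he : P.west (i, j + 1) = P.east (i, j) := (P.east_eq i j).symm
    by_cases hc : (i, j) ∈ P.cross
    · have : P.west (i, j + 1) = P.west (i, j) := by
        rw [he, ← P.west_cross _ hc]
      rw [this]; exact ih i
    · have hs : P.north (i + 1, j) = P.west (i, j + 1) := by
        rw [P.north_succ, P.south_bump _ hc, he]
      obtain ⟨i', hi', hb, hwst⟩ := P.col_descend (i + 1) j
      have := ih i'
      rw [hwst, hs] at this
      exact le_trans (le_trans (Nat.le_succ i) hi') this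

/-- Any tile on pipe k lies in a row ≤ w⁻¹ k. -/
lemma onPipe_row_le (P : PipeDream) (w : Equiv.Perm ℕ) (hw : P.IsFor w)
    (k : ℕ) (q : ℕ × ℕ) (hq : P.OnPipe k q) : q.1 ≤ w⁻¹ k := by
  obtain ⟨q1, q2⟩ := q
  cases hq with
  | inl h =>
    obtain ⟨i', hi', _, hwst⟩ := P.col_descend q1 q2
    have := P.le_inv_west w hw q2 i'
    rw [hwst, h] at this
    exact le_trans hi' this
  | inr h =>
    have := P.le_inv_west w hw (q2 + 1) q1
    rw [← P.east_eq, h] at this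
    exact this

/-- Walking west in row i: either the pipe exits at row i, or it turns south
at some bump in row i. -/
lemma west_walk (P : PipeDream) (w : Equiv.Perm ℕ) (hw : P.IsFor w) :
    ∀ j i, w i = P.west (i, j) ∨
      ∃ j', (i, j') ∉ P.cross ∧ P.south (i, j') = P.west (i, j) := by
  intro j
  induction j with
  | zero => intro i; exact Or.inl (hw i).symm
  | succ j ih =>
    intro i
    have he : P.west (i, j + 1) = P.east (i, j) := (P.east_eq i j).symm
    by_cases hc : (i, j) ∈ P.cross
    · have hww : P.west (i, j + 1) = P.west (i, j) := by
        rw [he, ← P.west_cross _ hc]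
      rw [hww]; exact ih i
    · exact Or.inr ⟨j, hc, by rw [P.south_bump _ hc, he]⟩

end PipeDream


/-- an (A,k)-aligned bump (p weakly northwest of pipe k and
(w_p, k) ∈ Inv(w⁻¹)) is slidable: w⁻¹(w_p) > row(p), i.e. there is a bump q in
the same row with s_q = w_p. -/
theorem stmt13 (w : Equiv.Perm ℕ) (hw : FinSupp w) (P : PipeDream)
    (hP : P ∈ PD w) (p : ℕ × ℕ) (hp : p ∉ P.cross) (k : ℕ)
    (hnw : P.NWOfPipe k p) (hinv : (P.west p, k) ∈ invSet w⁻¹) :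
    p.1 < w⁻¹ (P.west p) ∧
      ∃ q, q ∉ P.cross ∧ q.1 = p.1 ∧ P.south q = P.west p := by
  obtain ⟨hred, hfor⟩ := hP
  obtain ⟨q, hqk, hq1, hq2⟩ := hnw
  obtain ⟨-, hlt⟩ := hinv
  have h1 : p.1 < w⁻¹ (P.west p) :=
    lt_of_le_of_lt (le_trans hq1 (P.onPipe_row_le w hfor k q hqk)) hlt
  refine ⟨h1, ?_⟩
  obtain ⟨p1, p2⟩ := p
  rcases P.west_walk w hfor p2 p1 with hl | ⟨j', hb, hs⟩
  · exfalso
    have : w⁻¹ (P.west (p1, p2)) = p1 := by rw [← hl]; simp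
    simp only [this] at h1
    exact lt_irrefl _ h1
  · exact ⟨(p1, j'), hb, rfl, hs⟩
end
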